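/- Let p be a prime, n a positive integer, u ∈ Z_p^n with u ≠ 0, and let W be a Z_p-subspace of Z_p^((p-1))[x_1,...,x_n] with W ≠ Z_p^((p-1))[x_1,...,x_n]. Set R = { y ∈ Z_p^n : y^(p-1) ∈ W }, and for k ∈ Z_p set V_k = { y ∈ Z_p^n : y·u = k } and R_k = R ∩ V_k. Then for every k ≠ 0 in Z_p, p · |R_k| ≤ (p-1) · |V_k| (equivalently |R_k|/|V_k| ≤ (p-1)/p). -/

import Mathlib

open MvPolynomial

open Finset

/-- fiber counting over `Fin.cons` -/
lemma count_cons {K : Type*} [Fintype K] {m : ℕ} (Q : (Fin (m+1) → K) → Prop)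
    [DecidablePred Q] :
    (Finset.univ.filter Q).card
      = ∑ y' : Fin m → K, (Finset.univ.filter (fun a : K => Q (Fin.cons a y'))).card := by
  rw [Finset.card_filter]
  rw [← Fintype.sum_equiv (Fin.consEquiv (fun _ : Fin (m+1) => K))
      (fun pr => if Q (Fin.cons pr.1 pr.2) then 1 else 0) (fun y => if Q y then 1 else 0)
      (fun pr => rfl)]
  rw [Fintype.sum_prod_type, Finset.sum_comm]
  exact Finset.sum_congr rfl fun y' _ => (Finset.card_filter _ _).symm

lemma count_equiv {γ δ : Type*} [Fintype γ] [Fintype δ] (σ : γ ≃ δ) (Q : δ → Prop)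
    [DecidablePred Q] :
    (Finset.univ.filter fun c => Q (σ c)).card = (Finset.univ.filter Q).card := by
  rw [Finset.card_filter, Finset.card_filter]
  exact Fintype.sum_equiv σ _ _ (fun c => rfl)

/-- Schwartz–Zippel over `ZMod p`: a nonzero polynomial of total degree `d`
has at most `d * p^(m-1)` zeros, in the form `p * #zeros ≤ d * p^m`. -/
lemma schwartz_zippel {p : ℕ} [Fact p.Prime] : ∀ (m : ℕ) (f : MvPolynomial (Fin m) (ZMod p)),
    f ≠ 0 →
    p * (Finset.univ.filter fun y : Fin m → ZMod p => eval y f = 0).card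
      ≤ f.totalDegree * p ^ m := by
  intro m
  induction m with
  | zero =>
      intro f hf
      obtain ⟨a, rfl⟩ := MvPolynomial.C_surjective (Fin 0) f
      have ha : a ≠ 0 := fun h => hf (by simp [h])
      have : (Finset.univ.filter fun y : Fin 0 → ZMod p => eval y (C a) = 0) = ∅ := by
        ext y; simp [ha]
      simp [this, ha]
  | succ m ih =>
      intro f hf
      set F := MvPolynomial.finSuccEquiv (ZMod p) m f with hFdef
      have hF : F ≠ 0 := by
        rw [hFdef]; exact EmbeddingLike.map_ne_zero_iff.mpr hf
      set i := F.natDegree with hidef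
      set lead := F.coeff i with hleaddef
      have hlead : lead ≠ 0 := by
        rw [hleaddef, hidef]
        exact Polynomial.leadingCoeff_ne_zero.mpr hF
      -- per-fiber bound
      have key : ∀ y' : Fin m → ZMod p, eval y' lead ≠ 0 →
          (Finset.univ.filter fun a : ZMod p => eval (Fin.cons a y') f = 0).card ≤ i := by
        intro y' hy'
        set q := F.map (MvPolynomial.eval y') with hqdef
        have hq : q ≠ 0 := by
          intro h
          apply hy'
          have h2 : Polynomial.coeff (Polynomial.map (MvPolynomial.eval y') F) i = 0 := by
            rw [← hqdef, h, Polynomial.coeff_zero]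
          rw [Polynomial.coeff_map] at h2
          exact h2
        have hsub : (Finset.univ.filter fun a : ZMod p => eval (Fin.cons a y') f = 0)
            ⊆ q.roots.toFinset := by
          intro a ha
          simp only [Finset.mem_filter] at ha
          rw [Multiset.mem_toFinset, Polynomial.mem_roots hq, Polynomial.IsRoot,
            ← MvPolynomial.eval_eq_eval_mv_eval']
          exact ha.2
        calc (Finset.univ.filter fun a : ZMod p => eval (Fin.cons a y') f = 0).card
            ≤ q.roots.toFinset.card := Finset.card_le_card hsub
          _ ≤ Multiset.card q.roots := Multiset.toFinset_card_le _
          _ ≤ q.natDegree := Polynomial.card_roots' q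
          _ ≤ i := Polynomial.natDegree_map_le
      have count := count_cons (K := ZMod p) (m := m)
        (fun y : Fin (m+1) → ZMod p => eval y f = 0)
      set B := (Finset.univ.filter fun y' : Fin m → ZMod p => eval y' lead = 0) with hBdef
      have hsplit : ∑ y' : Fin m → ZMod p,
            (Finset.univ.filter fun a : ZMod p => eval (Fin.cons a y') f = 0).card
          ≤ B.card * p + p ^ m * i := by
        rw [← Finset.sum_filter_add_sum_filter_not Finset.univ
          (fun y' : Fin m → ZMod p => eval y' lead = 0)]
        gcongr
        · calc ∑ y' ∈ B, (Finset.univ.filter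
                (fun a : ZMod p => eval (Fin.cons a y') f = 0)).card
              ≤ ∑ _y' ∈ B, p := by
                refine Finset.sum_le_sum fun y' _ => ?_
                calc (Finset.univ.filter fun a : ZMod p =>
                      eval (Fin.cons a y') f = 0).card
                    ≤ (Finset.univ : Finset (ZMod p)).card := Finset.card_filter_le _ _
                  _ = p := by simp [ZMod.card]
            _ = B.card * p := by rw [Finset.sum_const, smul_eq_mul]
        · calc ∑ y' ∈ Finset.univ.filter
                (fun y' : Fin m → ZMod p => ¬ eval y' lead = 0),
                (Finset.univ.filter fun a : ZMod p => eval (Fin.cons a y') f = 0).card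
              ≤ ∑ y' ∈ Finset.univ.filter
                (fun y' : Fin m → ZMod p => ¬ eval y' lead = 0), i := by
                refine Finset.sum_le_sum fun y' hy' => ?_
                exact key y' (by simpa using (Finset.mem_filter.mp hy').2)
            _ ≤ p ^ m * i := by
                rw [Finset.sum_const, smul_eq_mul]
                gcongr
                calc (Finset.univ.filter
                      (fun y' : Fin m → ZMod p => ¬ eval y' lead = 0)).card
                    ≤ (Finset.univ : Finset (Fin m → ZMod p)).card :=
                      Finset.card_filter_le _ _
                  _ = p ^ m := by simp [ZMod.card]
      have hIH := ih lead hlead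
      have hdeg : lead.totalDegree + i ≤ f.totalDegree :=
        MvPolynomial.totalDegree_coeff_finSuccEquiv_add_le f i hlead
      calc p * (Finset.univ.filter fun y : Fin (m+1) → ZMod p => eval y f = 0).card
          = p * ∑ y' : Fin m → ZMod p,
              (Finset.univ.filter fun a : ZMod p => eval (Fin.cons a y') f = 0).card := by
            exact congrArg _ count
        _ ≤ p * (B.card * p + p ^ m * i) := by gcongr
        _ = (p * B.card) * p + i * p ^ (m+1) := by ring
        _ ≤ (lead.totalDegree * p ^ m) * p + i * p ^ (m+1) := by gcongr
        _ = (lead.totalDegree + i) * p ^ (m+1) := by ring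
        _ ≤ f.totalDegree * p ^ (m+1) := by gcongr

section PrimeStuff
variable {p : ℕ} [hpf : Fact p.Prime]

lemma sum_pow_eq_card_sub_one :
    ∑ t : ZMod p, t ^ (p - 1) = -1 := by
  have hp2 : 2 ≤ p := hpf.out.two_le
  have hp1 : 1 ≤ p := hpf.out.one_lt.le
  have h0 : (0 : ZMod p) ^ (p - 1) = 0 := by
    apply zero_pow
    omega
  rw [← Finset.sum_erase_add Finset.univ _ (Finset.mem_univ (0 : ZMod p)), h0, add_zero]
  have : ∀ t ∈ Finset.univ.erase (0 : ZMod p), t ^ (p - 1) = 1 := by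
    intro t ht
    exact ZMod.pow_card_sub_one_eq_one (Finset.mem_erase.mp ht).1
  rw [Finset.sum_congr rfl this, Finset.sum_const, Finset.card_erase_of_mem (Finset.mem_univ _)]
  rw [Finset.card_univ, ZMod.card, nsmul_eq_mul, mul_one, Nat.cast_sub hp1]
  simp [ZMod.natCast_self]

lemma sum_pow_small {i : ℕ} (hi : i < p - 1) :
    ∑ t : ZMod p, t ^ i = 0 := by
  have := FiniteField.sum_pow_lt_card_sub_one (K := ZMod p) i (by rwa [ZMod.card])
  exact this

/-- The key averaging identity:
`∑ t, (L(y + t z))^(p-1) = - (L z)^(p-1)` in `MvPolynomial`. -/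
lemma sum_shift_pow {n : ℕ} (y z : Fin n → ZMod p) :
    ∑ t : ZMod p, (∑ j, C ((y + t • z) j) * X j : MvPolynomial (Fin n) (ZMod p)) ^ (p - 1)
      = -((∑ j, C (z j) * X j : MvPolynomial (Fin n) (ZMod p)) ^ (p - 1)) := by
  have hp1 : 1 ≤ p - 1 := by have := hpf.out.two_le; omega
  set Ly : MvPolynomial (Fin n) (ZMod p) := ∑ j, C (y j) * X j with hLy
  set Lz : MvPolynomial (Fin n) (ZMod p) := ∑ j, C (z j) * X j with hLz
  have hlin : ∀ t : ZMod p,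
      (∑ j, C ((y + t • z) j) * X j : MvPolynomial (Fin n) (ZMod p)) = Ly + C t * Lz := by
    intro t
    rw [hLy, hLz, Finset.mul_sum, ← Finset.sum_add_distrib]
    refine Finset.sum_congr rfl fun j _ => ?_
    simp only [Pi.add_apply, Pi.smul_apply, smul_eq_mul, map_add, map_mul]
    ring
  simp only [hlin]
  have hexp : ∀ t : ZMod p, (Ly + C t * Lz) ^ (p - 1)
      = ∑ k ∈ Finset.range (p - 1 + 1),
          Ly ^ k * Lz ^ (p - 1 - k) * C (t ^ (p - 1 - k))
            * ((Nat.choose (p-1) k : ℕ) : MvPolynomial (Fin n) (ZMod p)) := by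
    intro t
    rw [add_pow]
    refine Finset.sum_congr rfl fun k _ => ?_
    rw [mul_pow, ← C_pow]
    ring
  simp only [hexp]
  rw [Finset.sum_comm]
  rw [Finset.sum_eq_single 0]
  · rw [pow_zero, Nat.sub_zero, Nat.choose_zero_right]
    rw [← Finset.sum_mul, ← Finset.mul_sum, ← map_sum]
    rw [sum_pow_eq_card_sub_one]
    simp
  · intro k hk hk0
    have hklt : p - 1 - k < p - 1 := by
      have := Finset.mem_range.mp hk
      omega
    rw [← Finset.sum_mul, ← Finset.mul_sum, ← map_sum, sum_pow_small hklt]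
    simp
  · intro h
    exact absurd (Finset.mem_range.mpr (by omega)) h

end PrimeStuff

lemma totalDegree_monomial_le' {R : Type*} [CommSemiring R] {σ : Type*} (d : σ →₀ ℕ) (a : R) :
    (monomial d a).totalDegree ≤ d.sum fun _ e => e := by
  by_cases h : a = 0
  · simp [h]
  · rw [totalDegree_monomial _ h]

lemma totalDegree_aeval_le {R : Type*} [CommRing R] {σ τ : Type*}
    (g : σ → MvPolynomial τ R) (hg : ∀ j, (g j).totalDegree ≤ 1) (f : MvPolynomial σ R) :
    (aeval g f).totalDegree ≤ f.totalDegree := by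
  conv_lhs => rw [f.as_sum]
  rw [map_sum]
  refine (totalDegree_finset_sum _ _).trans (Finset.sup_le fun d hd => ?_)
  rw [aeval_monomial]
  refine (totalDegree_mul _ _).trans ?_
  have h1 : (algebraMap R (MvPolynomial τ R) (coeff d f)).totalDegree = 0 := totalDegree_C _
  rw [h1, zero_add]
  calc (d.prod fun j e => g j ^ e).totalDegree
      ≤ ∑ j ∈ d.support, ((g j) ^ (d j)).totalDegree := totalDegree_finset_prod _ _
    _ ≤ ∑ j ∈ d.support, d j := by
        refine Finset.sum_le_sum fun j _ => ?_
        calc ((g j) ^ (d j)).totalDegree ≤ d j * (g j).totalDegree := totalDegree_pow _ _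
          _ ≤ d j * 1 := by gcongr; exact hg j
          _ = d j := mul_one _
    _ = d.sum fun _ e => e := rfl
    _ ≤ f.totalDegree := le_totalDegree hd

lemma apply_le_fsum {σ : Type*} (d : σ →₀ ℕ) (i : σ) : d i ≤ d.sum fun _ e => e := by
  by_cases h : i ∈ d.support
  · exact Finset.single_le_sum (f := fun j => d j) (fun _ _ => Nat.zero_le _) h
  · rw [Finsupp.notMem_support_iff.mp h]
    exact Nat.zero_le _

lemma aeval_apply_eq_eval {R : Type*} [CommSemiring R] {σ : Type*} (y : σ → R)
    (q : MvPolynomial σ R) : aeval y q = eval y q :=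
  DFunLike.congr_fun (coe_aeval_eq_eval y) q

lemma ncard_setOf_eq_card_filter {γ : Type*} [Fintype γ] (Q : γ → Prop) [DecidablePred Q] :
    ({x | Q x} : Set γ).ncard = (Finset.univ.filter Q).card := by
  rw [Set.ncard_eq_toFinset_card', Set.toFinset_setOf]

set_option maxHeartbeats 1000000
set_option synthInstance.maxHeartbeats 400000

/-- Main fraction lemma: if `u ≠ 0` and `W` is a proper subspace of the space of
homogeneous polynomials of degree `p-1` over `ZMod p`, then for every nonzero
`k ∈ ZMod p`, the set `R_k = {y : y^(p-1) ∈ W and y·u = k}` occupies at most a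
`(p-1)/p` fraction of `V_k = {y : y·u = k}`, i.e. `p * |R_k| ≤ (p-1) * |V_k|`. -/
theorem fraction_lemma {p n : ℕ} (hp : p.Prime) (hn : 0 < n)
    (u : Fin n → ZMod p) (hu : u ≠ 0)
    (W : Submodule (ZMod p) (MvPolynomial (Fin n) (ZMod p)))
    (hWle : W ≤ homogeneousSubmodule (Fin n) (ZMod p) (p - 1))
    (hWne : W ≠ homogeneousSubmodule (Fin n) (ZMod p) (p - 1)) :
    ∀ k : ZMod p, k ≠ 0 →
      p * ({y : Fin n → ZMod p |
              (∑ j, C (y j) * X j : MvPolynomial (Fin n) (ZMod p)) ^ (p - 1) ∈ W ∧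
              ∑ j, y j * u j = k}).ncard ≤
        (p - 1) * ({y : Fin n → ZMod p | ∑ j, y j * u j = k}).ncard := by
  haveI hpf : Fact p.Prime := ⟨hp⟩
  classical
  intro k hk
  obtain ⟨m, rfl⟩ : ∃ m, n = m + 1 := ⟨n - 1, by omega⟩
  obtain ⟨j0, hj0⟩ : ∃ j0, u j0 ≠ 0 := by
    by_contra h; push_neg at h; exact hu (funext h)
  -- the separating functional
  obtain ⟨x₀, hx₀H, hx₀W⟩ :
      ∃ x₀, x₀ ∈ homogeneousSubmodule (Fin (m+1)) (ZMod p) (p-1) ∧ x₀ ∉ W := by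
    obtain ⟨x₀, h1, h2⟩ := SetLike.exists_of_lt (lt_of_le_of_ne hWle hWne)
    exact ⟨x₀, h1, h2⟩
  obtain ⟨φ, hφx₀, hφW⟩ := Submodule.exists_dual_map_eq_bot_of_notMem hx₀W inferInstance
  have hφW' : ∀ w ∈ W, φ w = 0 := by
    intro w hw
    have : φ w ∈ W.map φ := Submodule.mem_map_of_mem hw
    rw [hφW] at this
    exact (Submodule.mem_bot (ZMod p)).mp this
  -- the polynomial f whose evaluations compute φ ∘ P
  set D := Finset.piAntidiag (Finset.univ : Finset (Fin (m+1))) (p - 1) with hD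
  set f : MvPolynomial (Fin (m+1)) (ZMod p) :=
    ∑ c ∈ D, monomial (Finsupp.equivFunOnFinite.symm c)
      ((Nat.multinomial Finset.univ c : ZMod p)
        * φ (monomial (Finsupp.equivFunOnFinite.symm c) 1)) with hf
  have hmono : ∀ c : Fin (m+1) → ℕ,
      (monomial (Finsupp.equivFunOnFinite.symm c) (1 : ZMod p))
        = ∏ j, (X j : MvPolynomial (Fin (m+1)) (ZMod p)) ^ c j := by
    intro c
    rw [monomial_eq, map_one, one_mul]
    rw [Finsupp.prod_fintype _ _ (fun i => pow_zero _)]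
    rfl
  have hexpand : ∀ y : Fin (m+1) → ZMod p,
      (∑ j, C (y j) * X j : MvPolynomial (Fin (m+1)) (ZMod p)) ^ (p - 1)
        = ∑ c ∈ D, ((Nat.multinomial Finset.univ c : ZMod p) * ∏ j, y j ^ c j)
            • monomial (Finsupp.equivFunOnFinite.symm c) (1 : ZMod p) := by
    intro y
    rw [Finset.sum_pow_eq_sum_piAntidiag]
    refine Finset.sum_congr rfl fun c _ => ?_
    rw [hmono c, smul_eq_C_mul, map_mul]
    have h1 : ∏ j, ((C (y j) * X j : MvPolynomial (Fin (m+1)) (ZMod p))) ^ c j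
        = C (∏ j, y j ^ c j) * ∏ j, (X j : MvPolynomial (Fin (m+1)) (ZMod p)) ^ c j := by
      rw [map_prod, ← Finset.prod_mul_distrib]
      exact Finset.prod_congr rfl fun j _ => by rw [mul_pow, C_pow]
    rw [h1]
    rw [map_natCast (C : ZMod p →+* MvPolynomial (Fin (m+1)) (ZMod p))]
    ring
  have heval : ∀ y : Fin (m+1) → ZMod p,
      eval y f = φ ((∑ j, C (y j) * X j : MvPolynomial (Fin (m+1)) (ZMod p)) ^ (p - 1)) := by
    intro y
    rw [hexpand y, hf, map_sum, map_sum]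
    refine Finset.sum_congr rfl fun c _ => ?_
    rw [map_smul, smul_eq_mul, eval_monomial]
    rw [Finsupp.prod_fintype _ _ (fun i => pow_zero _)]
    have hcoe : ∀ j, (Finsupp.equivFunOnFinite.symm c) j = c j := fun _ => rfl
    simp only [hcoe]
    ring
  have hfdeg : f.totalDegree ≤ p - 1 := by
    rw [hf]
    refine (totalDegree_finset_sum _ _).trans (Finset.sup_le fun c hc => ?_)
    refine (totalDegree_monomial_le' _ _).trans ?_
    have hsumc : ∑ i, c i = p - 1 := ((Finset.mem_piAntidiag.mp (hD ▸ hc)).1)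
    rw [Finsupp.sum_fintype _ _ (fun i => rfl)]
    exact le_of_eq hsumc
  -- Step 2b : a point off the hyperplane where f does not vanish
  have h2b : ∃ y1 : Fin (m+1) → ZMod p, (∑ j, y1 j * u j) ≠ 0 ∧ eval y1 f ≠ 0 := by
    by_contra hcon
    push_neg at hcon
    set z : Fin (m+1) → ZMod p := fun j => if j = j0 then (u j0)⁻¹ else 0 with hzdef
    have hz : ∑ j, z j * u j = 1 := by
      rw [Finset.sum_eq_single j0]
      · simp [hzdef, inv_mul_cancel₀ hj0]
      · intro b _ hb; simp [hzdef, hb]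
      · intro h; exact absurd (Finset.mem_univ j0) h
    have hall : ∀ y, eval y f = 0 := by
      intro y
      by_cases hy : (∑ j, y j * u j) = 0
      · have hid := sum_shift_pow (p := p) y z
        have happ := congrArg φ hid
        rw [map_sum, map_neg] at happ
        have hdot2 : ∀ t : ZMod p, (∑ j, (y + t • z) j * u j) = t := by
          intro t
          simp only [Pi.add_apply, Pi.smul_apply, smul_eq_mul, add_mul]
          rw [Finset.sum_add_distrib, hy, zero_add]
          simp only [mul_assoc]
          rw [← Finset.mul_sum, hz, mul_one]
        have hterm : ∀ t ∈ (Finset.univ : Finset (ZMod p)), t ≠ 0 →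
            φ ((∑ j, C ((y + t • z) j) * X j : MvPolynomial (Fin (m+1)) (ZMod p)) ^ (p - 1))
              = 0 := by
          intro t _ ht
          rw [← heval]
          exact hcon _ (by rw [hdot2 t]; exact ht)
        rw [Finset.sum_eq_single 0 hterm (fun h => absurd (Finset.mem_univ 0) h)] at happ
        have hz0 : φ ((∑ j, C (z j) * X j : MvPolynomial (Fin (m+1)) (ZMod p)) ^ (p - 1))
            = 0 := by
          rw [← heval]
          exact hcon z (by rw [hz]; exact one_ne_zero)
        rw [hz0, neg_zero] at happ
        have hy0 : y + (0 : ZMod p) • z = y := by simp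
        rw [hy0] at happ
        rw [heval y, happ]
      · exact hcon y hy
    have hf0 : f = 0 := by
      apply MvPolynomial.eq_zero_of_eval_eq_zero (Fin (m+1)) (ZMod p) f hall
      rw [MvPolynomial.mem_restrictDegree]
      intro s hs i
      rw [ZMod.card]
      calc s i ≤ s.sum fun _ e => e := apply_le_fsum s i
        _ ≤ f.totalDegree := le_totalDegree hs
        _ ≤ p - 1 := hfdeg
    apply hφx₀
    conv_lhs => rw [x₀.as_sum]
    rw [map_sum]
    refine Finset.sum_eq_zero fun d hd => ?_
    have hx₀hom : x₀.IsHomogeneous (p-1) := (mem_homogeneousSubmodule _ _).mp hx₀H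
    have hdsum : ∑ i, d i = p - 1 := by
      have h1 := hx₀hom (mem_support_iff.mp hd)
      rw [show (Finsupp.weight (1 : Fin (m+1) → ℕ)) = Finsupp.degree from
        (Finsupp.degree_eq_weight_one (R := ℕ)).symm] at h1
      rw [← h1]
      show ∑ i ∈ Finset.univ, d i = Finsupp.degree d
      exact (Finset.sum_subset (Finset.subset_univ _)
        (fun x _ hx => Finsupp.notMem_support_iff.mp hx)).symm
    have hcd : (⇑d : Fin (m+1) → ℕ) ∈ D := by
      rw [hD, Finset.mem_piAntidiag]
      exact ⟨hdsum, fun i _ => Finset.mem_univ i⟩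
    have hcoeff : coeff d f
        = (Nat.multinomial Finset.univ ⇑d : ZMod p) * φ (monomial d 1) := by
      rw [hf, MvPolynomial.coeff_sum]
      rw [Finset.sum_eq_single (⇑d : Fin (m+1) → ℕ)]
      · rw [coeff_monomial, if_pos (Finsupp.equivFunOnFinite_symm_coe d),
          Finsupp.equivFunOnFinite_symm_coe]
      · intro c _ hne
        rw [coeff_monomial, if_neg]
        intro hcd2
        exact hne (funext fun j => by
          rw [show c j = (Finsupp.equivFunOnFinite.symm c) j from rfl, hcd2])
      · intro hd2; exact absurd hcd hd2
    have hmulne : (Nat.multinomial Finset.univ (⇑d) : ZMod p) ≠ 0 := by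
      rw [Ne, ZMod.natCast_eq_zero_iff]
      intro hdvd
      have h2 : Nat.multinomial Finset.univ ⇑d ∣ (∑ i, d i).factorial :=
        Dvd.intro_left _ (Nat.multinomial_spec _ _)
      have h3 : p ∣ (∑ i, d i).factorial := hdvd.trans h2
      rw [Nat.Prime.dvd_factorial hp, hdsum] at h3
      have := hp.two_le
      omega
    have hφm1 : φ (monomial d 1) = 0 := by
      have hco := congrArg (coeff d) hf0
      rw [coeff_zero, hcoeff] at hco
      exact (mul_eq_zero.mp hco).resolve_left hmulne
    have hmm : monomial d (coeff d x₀) = (coeff d x₀) • monomial d (1 : ZMod p) := by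
      rw [smul_monomial, smul_eq_mul, mul_one]
    rw [hmm, map_smul, hφm1, smul_zero]
  obtain ⟨y1, hy1u, hy1f⟩ := h2b
  -- scale y1 into the hyperplane V_k
  set c0 : ZMod p := k * (∑ j, y1 j * u j)⁻¹ with hc0
  have hc0ne : c0 ≠ 0 := mul_ne_zero hk (inv_ne_zero hy1u)
  set y2 : Fin (m+1) → ZMod p := c0 • y1 with hy2
  have hy2u : ∑ j, y2 j * u j = k := by
    rw [hy2]
    have hterm : ∀ j, (c0 • y1) j * u j = c0 * (y1 j * u j) := fun j => by
      simp [mul_assoc]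
    rw [Finset.sum_congr rfl (fun j _ => hterm j), ← Finset.mul_sum, hc0, mul_assoc,
      inv_mul_cancel₀ hy1u, mul_one]
  have hLy2 : (∑ j, C (y2 j) * X j : MvPolynomial (Fin (m+1)) (ZMod p))
      = C c0 * ∑ j, C (y1 j) * X j := by
    rw [Finset.mul_sum]
    refine Finset.sum_congr rfl fun j _ => ?_
    rw [hy2]
    simp only [Pi.smul_apply, smul_eq_mul, map_mul, mul_assoc]
  have hy2f : eval y2 f ≠ 0 := by
    rw [heval, hLy2, mul_pow, ← C_pow, ZMod.pow_card_sub_one_eq_one hc0ne, map_one, one_mul,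
      ← heval]
    exact hy1f
  -- swap coordinates so that position 0 carries a nonzero coefficient
  set e : Equiv.Perm (Fin (m+1)) := Equiv.swap 0 j0 with he
  have hes : ∀ j, e (e j) = j := fun j => Equiv.swap_apply_self _ _ _
  set v : Fin (m+1) → ZMod p := fun j => u (e j) with hv
  have hv0 : v 0 ≠ 0 := by
    rw [hv]
    simpa [he, Equiv.swap_apply_left] using hj0
  set ft := rename (⇑e) f with hft
  have hftev : ∀ w, eval w ft = eval (w ∘ ⇑e) f := fun w => by rw [hft, eval_rename]
  have hdot : ∀ w : Fin (m+1) → ZMod p, (∑ j, (w ∘ ⇑e) j * u j) = ∑ j, w j * v j := by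
    intro w
    rw [← Equiv.sum_comp e (fun j => w j * v j)]
    refine Finset.sum_congr rfl fun j _ => ?_
    rw [Function.comp_apply, hv]
    simp only [hes j]
  -- affine parametrization of the hyperplane
  set α : (Fin m → ZMod p) → ZMod p :=
    fun y' => (v 0)⁻¹ * (k - ∑ j, y' j * v j.succ) with hα
  set A : MvPolynomial (Fin m) (ZMod p) :=
    C ((v 0)⁻¹ * k) + ∑ j : Fin m, C (-(v 0)⁻¹ * v j.succ) * X j with hA
  have hAev : ∀ y', eval y' A = α y' := by
    intro y'
    rw [hA]
    simp only [hα]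
    simp only [map_add, map_sum, map_mul, eval_C, eval_X]
    rw [mul_sub, Finset.mul_sum, sub_eq_add_neg, ← Finset.sum_neg_distrib]
    congr 1
    refine Finset.sum_congr rfl fun j _ => by ring
  have hconsiff : ∀ (a : ZMod p) (y' : Fin m → ZMod p),
      (∑ j, (Fin.cons a y' : Fin (m+1) → ZMod p) j * v j = k) ↔ a = α y' := by
    intro a y'
    rw [Fin.sum_univ_succ]
    simp only [Fin.cons_zero, Fin.cons_succ]
    simp only [hα]
    constructor
    · intro h
      have h2 : a * v 0 = k - ∑ j, y' j * v j.succ := by rw [← h]; ring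
      rw [← h2, mul_comm a (v 0), inv_mul_cancel_left₀ hv0]
    · intro h
      rw [h]
      field_simp [hv0]
      try ring
  set subs : Fin (m+1) → MvPolynomial (Fin m) (ZMod p) := Fin.cons A (fun j => X j) with hsubs
  set F' : MvPolynomial (Fin m) (ZMod p) := aeval subs ft with hF'
  have hF'ev : ∀ y', eval y' F' = eval (Fin.cons (α y') y') ft := by
    intro y'
    rw [hF', ← aeval_apply_eq_eval y', comp_aeval_apply, aeval_apply_eq_eval]
    have harg : (fun i => aeval y' (subs i)) = Fin.cons (α y') y' := by
      funext i
      refine Fin.cases ?_ (fun j => ?_) i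
      · simp only [hsubs, Fin.cons_zero]
        rw [aeval_apply_eq_eval, hAev]
      · simp only [hsubs, Fin.cons_succ, aeval_X]
    rw [harg]
  have hF'ne : F' ≠ 0 := by
    set w2 : Fin (m+1) → ZMod p := y2 ∘ ⇑e with hw2
    have hw2e : w2 ∘ ⇑e = y2 := funext fun j => congrArg y2 (hes j)
    have hw2ft : eval w2 ft = eval y2 f := by rw [hftev, hw2e]
    have hw2v : ∑ j, w2 j * v j = k := by rw [← hdot, hw2e, hy2u]
    have hw20 : w2 0 = α (Fin.tail w2) := by
      apply (hconsiff (w2 0) (Fin.tail w2)).mp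
      rw [Fin.cons_self_tail]
      exact hw2v
    intro h0
    apply hy2f
    calc eval y2 f = eval w2 ft := hw2ft.symm
      _ = eval (Fin.tail w2) F' := by rw [hF'ev, ← hw20, Fin.cons_self_tail]
      _ = 0 := by rw [h0, map_zero]
  have hF'deg : F'.totalDegree ≤ p - 1 := by
    rw [hF']
    refine (totalDegree_aeval_le subs ?_ ft).trans ?_
    · intro i
      refine Fin.cases ?_ (fun j => ?_) i
      · rw [hsubs]
        simp only [Fin.cons_zero]
        rw [hA]
        refine (totalDegree_add _ _).trans (max_le ?_ ?_)
        · rw [totalDegree_C]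
          exact Nat.zero_le _
        · refine (totalDegree_finset_sum _ _).trans (Finset.sup_le fun j _ => ?_)
          refine (totalDegree_mul _ _).trans ?_
          rw [totalDegree_C, totalDegree_X]
      · rw [hsubs]
        simp only [Fin.cons_succ]
        rw [totalDegree_X]
    · calc ft.totalDegree ≤ f.totalDegree := by rw [hft]; exact totalDegree_rename_le _ _
        _ ≤ p - 1 := hfdeg
  -- Schwartz–Zippel
  have hSZ' : p * (Finset.univ.filter fun y' : Fin m → ZMod p => eval y' F' = 0).card
      ≤ (p-1) * p^m := by
    refine (schwartz_zippel m F' hF'ne).trans ?_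
    exact Nat.mul_le_mul_right _ hF'deg
  -- transfer of cardinalities
  let pe : (Fin (m+1) → ZMod p) ≃ (Fin (m+1) → ZMod p) :=
    { toFun := fun w => w ∘ ⇑e, invFun := fun w => w ∘ ⇑e,
      left_inv := fun w => funext fun j => congrArg w (hes j),
      right_inv := fun w => funext fun j => congrArg w (hes j) }
  have step1 : ({y : Fin (m+1) → ZMod p |
        (∑ j, C (y j) * X j : MvPolynomial (Fin (m+1)) (ZMod p)) ^ (p - 1) ∈ W ∧
        ∑ j, y j * u j = k}).ncard
      ≤ ({y : Fin (m+1) → ZMod p | eval y f = 0 ∧ ∑ j, y j * u j = k}).ncard := by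
    refine Set.ncard_le_ncard (fun y hy => ?_) (Set.toFinite _)
    exact ⟨by rw [heval]; exact hφW' _ hy.1, hy.2⟩
  have step2 : ({y : Fin (m+1) → ZMod p | eval y f = 0 ∧ ∑ j, y j * u j = k}).ncard
      = ({w : Fin (m+1) → ZMod p | eval w ft = 0 ∧ ∑ j, w j * v j = k}).ncard := by
    rw [← Nat.card_coe_set_eq, ← Nat.card_coe_set_eq]
    refine (Nat.card_congr (Equiv.subtypeEquiv pe fun w => ?_)).symm
    show (eval w ft = 0 ∧ ∑ j, w j * v j = k)
      ↔ (eval (w ∘ ⇑e) f = 0 ∧ ∑ j, (w ∘ ⇑e) j * u j = k)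
    rw [hftev w, ← hdot w]
  have step3 : ({w : Fin (m+1) → ZMod p | eval w ft = 0 ∧ ∑ j, w j * v j = k}).ncard
      = ({y' : Fin m → ZMod p | eval y' F' = 0}).ncard := by
    rw [ncard_setOf_eq_card_filter, ncard_setOf_eq_card_filter]
    rw [count_cons (fun w : Fin (m+1) → ZMod p => eval w ft = 0 ∧ ∑ j, w j * v j = k)]
    rw [Finset.card_filter (fun y' : Fin m → ZMod p => eval y' F' = 0)]
    refine Finset.sum_congr rfl fun y' _ => ?_
    have hfib : (Finset.univ.filter fun a : ZMod p =>
          eval (Fin.cons a y') ft = 0 ∧ ∑ j, (Fin.cons a y' : Fin (m+1) → ZMod p) j * v j = k)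
        = if eval y' F' = 0 then {α y'} else ∅ := by
      ext a
      simp only [Finset.mem_filter, Finset.mem_univ, true_and]
      rw [and_comm, hconsiff a y']
      by_cases hQ : eval y' F' = 0
      · rw [if_pos hQ]
        simp only [Finset.mem_singleton]
        constructor
        · rintro ⟨h2, _⟩; exact h2
        · intro h
          exact ⟨h, by rw [h, ← hF'ev]; exact hQ⟩
      · rw [if_neg hQ]
        simp only [Finset.notMem_empty, iff_false, not_and]
        intro h2 h1
        apply hQ
        rw [hF'ev, ← h2]
        exact h1
    rw [hfib]
    split_ifs <;> simp
  have hVcard : ({y : Fin (m+1) → ZMod p | ∑ j, y j * u j = k}).ncard = p^m := by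
    have htr : ({y : Fin (m+1) → ZMod p | ∑ j, y j * u j = k}).ncard
        = ({w : Fin (m+1) → ZMod p | ∑ j, w j * v j = k}).ncard := by
      rw [← Nat.card_coe_set_eq, ← Nat.card_coe_set_eq]
      refine (Nat.card_congr (Equiv.subtypeEquiv pe fun w => ?_)).symm
      show (∑ j, w j * v j = k) ↔ (∑ j, (w ∘ ⇑e) j * u j = k)
      rw [hdot w]
    rw [htr, ncard_setOf_eq_card_filter]
    rw [count_cons (fun w : Fin (m+1) → ZMod p => ∑ j, w j * v j = k)]
    have hfib : ∀ y' : Fin m → ZMod p, (Finset.univ.filter fun a : ZMod p =>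
        ∑ j, (Fin.cons a y' : Fin (m+1) → ZMod p) j * v j = k) = {α y'} := by
      intro y'
      ext a
      simp only [Finset.mem_filter, Finset.mem_univ, true_and, Finset.mem_singleton]
      exact hconsiff a y'
    simp only [hfib, Finset.card_singleton]
    simp [ZMod.card]
  have step4 : p * ({y' : Fin m → ZMod p | eval y' F' = 0}).ncard ≤ (p-1) * p^m := by
    rw [ncard_setOf_eq_card_filter]
    exact hSZ'
  calc p * ({y : Fin (m+1) → ZMod p |
        (∑ j, C (y j) * X j : MvPolynomial (Fin (m+1)) (ZMod p)) ^ (p - 1) ∈ W ∧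
        ∑ j, y j * u j = k}).ncard
      ≤ p * ({y : Fin (m+1) → ZMod p | eval y f = 0 ∧ ∑ j, y j * u j = k}).ncard :=
        Nat.mul_le_mul_left _ step1
    _ = p * ({y' : Fin m → ZMod p | eval y' F' = 0}).ncard := by rw [step2, step3]
    _ ≤ (p-1) * p^m := step4
    _ = (p-1) * ({y : Fin (m+1) → ZMod p | ∑ j, y j * u j = k}).ncard := by rw [hVcard]
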